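/- For every n ≥ 1, the sum over all perfect matchings D of the complete graph K_{2n} (with vertices placed in convex position in the plane, edges drawn as straight segments) of (-1)^{t(D)}, where t(D) is the number of pairs of edges of D that cross, equals 1. -/

import Mathlib

open scoped Classical

namespace S0

open Finset Equiv

variable {N : ℕ}

def X (f : Equiv.Perm (Fin N)) : Finset (Fin N × Fin N) :=
  Finset.univ.filter
    (fun pr : Fin N × Fin N =>
      pr.1 < f pr.1 ∧ pr.2 < f pr.2 ∧ pr.1 < pr.2 ∧ pr.2 < f pr.1 ∧ f pr.1 < f pr.2)

lemma mem_X {f : Equiv.Perm (Fin N)} {pr : Fin N × Fin N} :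
    pr ∈ X f ↔
      pr.1 < f pr.1 ∧ pr.2 < f pr.2 ∧ pr.1 < pr.2 ∧ pr.2 < f pr.1 ∧ f pr.1 < f pr.2 := by
  simp [X]

lemma pair_ne_fst {α β : Type*} {x a : α} {y b : β} (h : x ≠ a) : (x, y) ≠ (a, b) :=
  fun he => h (congrArg Prod.fst he)

lemma pair_ne_snd {α β : Type*} {x a : α} {y b : β} (h : y ≠ b) : (x, y) ≠ (a, b) :=
  fun he => h (congrArg Prod.snd he)

lemma key (f g : Equiv.Perm (Fin N)) (a b : Fin N) (hab : (b : ℕ) = (a : ℕ) + 1)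
    (hga : g a = f b) (hgb : g b = f a)
    (hoff : ∀ x, x ≠ a → x ≠ b → x ≠ f a → x ≠ f b → g x = f x)
    (hffa : f (f a) = a) (hffb : f (f b) = b)
    (hfa : (a : ℕ) + 1 < ((f a : Fin N) : ℕ)) (hfb : (a : ℕ) + 1 < ((f b : Fin N) : ℕ))
    (hlow : ∀ x : Fin N, (x : ℕ) < (a : ℕ) → ((f x : Fin N) : ℕ) < (a : ℕ))
    (p q : Fin N) (hne : (p, q) ≠ (a, b)) (h : (p, q) ∈ X f) :
    (Equiv.swap a b p, Equiv.swap a b q) ∈ X g ∧ (Equiv.swap a b p, Equiv.swap a b q) ≠ (a, b) := by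
  rw [mem_X] at h
  obtain ⟨h1, h2, h3, h4, h5⟩ := h
  simp only [Fin.lt_def] at h1 h2 h3 h4 h5
  by_cases hpa : p = a
  · rw [hpa] at h1 h3 h4 h5
    by_cases hqb : q = b
    · exact absurd (by rw [hpa, hqb]) hne
    have hqa : q ≠ a := Fin.ne_of_val_ne (by omega)
    by_cases hqfa : q = f a
    · exfalso; rw [hqfa, hffa] at h2; omega
    by_cases hqfb : q = f b
    · exfalso; rw [hqfb, hffb] at h2; omega
    have hqb' : (q : ℕ) ≠ (b : ℕ) := fun hh => hqb (Fin.ext hh)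
    rw [hpa, Equiv.swap_apply_left, Equiv.swap_apply_of_ne_of_ne hqa hqb]
    refine ⟨?_, pair_ne_fst (Fin.ne_of_val_ne (by omega))⟩
    rw [mem_X]
    simp only [hgb, hoff q hqa hqb hqfa hqfb, Fin.lt_def]
    refine ⟨by omega, by omega, by omega, by omega, by omega⟩
  · by_cases hpb : p = b
    · rw [hpb] at h1 h3 h4 h5
      have hqa : q ≠ a := Fin.ne_of_val_ne (by omega)
      have hqb : q ≠ b := Fin.ne_of_val_ne (by omega)
      by_cases hqfa : q = f a
      · exfalso; rw [hqfa, hffa] at h2; omega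
      by_cases hqfb : q = f b
      · exfalso; rw [hqfb, hffb] at h2; omega
      rw [hpb, Equiv.swap_apply_right, Equiv.swap_apply_of_ne_of_ne hqa hqb]
      refine ⟨?_, pair_ne_snd hqb⟩
      rw [mem_X]
      simp only [hga, hoff q hqa hqb hqfa hqfb, Fin.lt_def]
      refine ⟨by omega, by omega, by omega, by omega, by omega⟩
    · -- p ∉ {a, b}
      have hpa' : (p : ℕ) ≠ (a : ℕ) := fun hh => hpa (Fin.ext hh)
      by_cases hqa : q = a
      · exfalso
        rw [hqa] at h3 h4
        have := hlow p h3
        omega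
      by_cases hqb : q = b
      · exfalso
        rw [hqb] at h3 h4
        have hp : (p : ℕ) < (a : ℕ) := by omega
        have := hlow p hp
        omega
      by_cases hpfa : p = f a
      · exfalso; rw [hpfa, hffa] at h1; omega
      by_cases hpfb : p = f b
      · exfalso; rw [hpfb, hffb] at h1; omega
      by_cases hqfa : q = f a
      · exfalso; rw [hqfa, hffa] at h2; omega
      by_cases hqfb : q = f b
      · exfalso; rw [hqfb, hffb] at h2; omega
      rw [Equiv.swap_apply_of_ne_of_ne hpa hpb, Equiv.swap_apply_of_ne_of_ne hqa hqb]
      refine ⟨?_, pair_ne_fst hpa⟩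
      rw [mem_X]
      simp only [hoff p hpa hpb hpfa hpfb, hoff q hqa hqb hqfa hqfb, Fin.lt_def]
      exact ⟨h1, h2, h3, h4, h5⟩

section
variable (f g : Equiv.Perm (Fin N)) (a b : Fin N) (hab : (b : ℕ) = (a : ℕ) + 1)
    (hga : g a = f b) (hgb : g b = f a)
    (hoff : ∀ x, x ≠ a → x ≠ b → x ≠ f a → x ≠ f b → g x = f x)
    (hffa : f (f a) = a) (hffb : f (f b) = b)
    (hgfa : g (f a) = b) (hgfb : g (f b) = a)
    (hfa : (a : ℕ) + 1 < ((f a : Fin N) : ℕ)) (hfb : (a : ℕ) + 1 < ((f b : Fin N) : ℕ))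
    (hlow : ∀ x : Fin N, (x : ℕ) < (a : ℕ) → ((f x : Fin N) : ℕ) < (a : ℕ))

include hab hga hgb hoff hffa hffb hgfa hgfb hfa hfb hlow

lemma card_X_erase : ((X f).erase (a, b)).card = ((X g).erase (a, b)).card := by
  have hoff' : ∀ x, x ≠ a → x ≠ b → x ≠ g a → x ≠ g b → f x = g x := by
    intro x h1 h2 h3 h4
    rw [hga] at h3; rw [hgb] at h4
    exact (hoff x h1 h2 h4 h3).symm
  have hgga : g (g a) = a := by rw [hga]; exact hgfb
  have hggb : g (g b) = b := by rw [hgb]; exact hgfa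
  have hga' : (a : ℕ) + 1 < ((g a : Fin N) : ℕ) := by rw [hga]; exact hfb
  have hgb' : (a : ℕ) + 1 < ((g b : Fin N) : ℕ) := by rw [hgb]; exact hfa
  have hlow' : ∀ x : Fin N, (x : ℕ) < (a : ℕ) → ((g x : Fin N) : ℕ) < (a : ℕ) := by
    intro x hx
    have h1 : x ≠ a := Fin.ne_of_val_ne (by omega)
    have h2 : x ≠ b := Fin.ne_of_val_ne (by omega)
    have h3 : x ≠ f a := Fin.ne_of_val_ne (by omega)
    have h4 : x ≠ f b := Fin.ne_of_val_ne (by omega)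
    rw [hoff x h1 h2 h3 h4]
    exact hlow x hx
  apply Finset.card_nbij' (fun pr => (Equiv.swap a b pr.1, Equiv.swap a b pr.2))
    (fun pr => (Equiv.swap a b pr.1, Equiv.swap a b pr.2))
  · intro pr hpr
    rw [Finset.mem_coe, Finset.mem_erase] at hpr ⊢
    have := key f g a b hab hga hgb hoff hffa hffb hfa hfb hlow pr.1 pr.2 hpr.1 hpr.2
    exact ⟨this.2, this.1⟩
  · intro pr hpr
    rw [Finset.mem_coe, Finset.mem_erase] at hpr ⊢
    have := key g f a b hab hgb.symm hga.symm hoff' hgga hggb hga' hgb' hlow' pr.1 pr.2 hpr.1 hpr.2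
    exact ⟨this.2, this.1⟩
  · intro pr _
    simp [Equiv.swap_apply_self]
  · intro pr _
    simp [Equiv.swap_apply_self]

lemma sum_pair (hfab : f a ≠ f b) :
    (-1 : ℤ) ^ (X f).card + (-1 : ℤ) ^ (X g).card = 0 := by
  have hmemf : (a, b) ∈ X f ↔ f a < f b := by
    rw [mem_X]
    simp only [Fin.lt_def]
    constructor
    · intro h; exact Fin.lt_def.mpr h.2.2.2.2
    · intro h
      exact ⟨by omega, by omega, by omega, by omega, Fin.lt_def.mp h⟩
  have hmemg : (a, b) ∈ X g ↔ f b < f a := by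
    rw [mem_X]
    simp only [hga, hgb, Fin.lt_def]
    constructor
    · intro h; exact Fin.lt_def.mpr h.2.2.2.2
    · intro h
      exact ⟨by omega, by omega, by omega, by omega, Fin.lt_def.mp h⟩
  have hcard := card_X_erase f g a b hab hga hgb hoff hffa hffb hgfa hgfb hfa hfb hlow
  rcases lt_or_gt_of_ne hfab with hlt | hlt
  · have h1 : ((X f).erase (a, b)).card + 1 = (X f).card :=
      Finset.card_erase_add_one (hmemf.mpr hlt)
    have h2 : ((X g).erase (a, b)) = X g :=
      Finset.erase_eq_of_notMem (fun hm => absurd (hmemg.mp hm) (asymm hlt))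
    rw [← h1, hcard, h2, pow_succ]
    ring
  · have h1 : ((X g).erase (a, b)).card + 1 = (X g).card :=
      Finset.card_erase_add_one (hmemg.mpr hlt)
    have h2 : ((X f).erase (a, b)) = X f :=
      Finset.erase_eq_of_notMem (fun hm => absurd (hmemf.mp hm) (asymm hlt))
    rw [← h1, ← hcard, h2, pow_succ]
    ring
end

def pairFn (n : ℕ) (x : Fin (2*n)) : Fin (2*n) :=
  if _h : (x:ℕ) % 2 = 0 then ⟨(x:ℕ)+1, by have := x.isLt; omega⟩
  else ⟨(x:ℕ)-1, by have := x.isLt; omega⟩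

lemma pairFn_invol (n : ℕ) : Function.Involutive (pairFn n) := by
  intro x
  unfold pairFn
  split
  · next h =>
    have : (((⟨(x:ℕ)+1, by have := x.isLt; omega⟩ : Fin (2*n)) : ℕ)) % 2 ≠ 0 := by
      simp; omega
    rw [dif_neg this]
    exact Fin.ext (by simp)
  · next h =>
    have hx1 : 1 ≤ (x:ℕ) := by omega
    have : (((⟨(x:ℕ)-1, by have := x.isLt; omega⟩ : Fin (2*n)) : ℕ)) % 2 = 0 := by
      simp; omega
    rw [dif_pos this]
    exact Fin.ext (by simp; omega)

noncomputable def f0 (n : ℕ) : Equiv.Perm (Fin (2*n)) :=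
  Function.Involutive.toPerm _ (pairFn_invol n)

lemma f0_apply (n : ℕ) (x : Fin (2*n)) : f0 n x = pairFn n x := rfl

lemma f0_even (n j : ℕ) (hj : 2*j+1 < 2*n) :
    f0 n ⟨2*j, by omega⟩ = ⟨2*j+1, hj⟩ := by
  rw [f0_apply]
  unfold pairFn
  rw [dif_pos (by simp)]

lemma f0_fpf (n : ℕ) (x : Fin (2*n)) : f0 n x ≠ x := by
  rw [f0_apply]
  unfold pairFn
  split
  · next h => exact Fin.ne_of_val_ne (by simp)
  · next h => exact Fin.ne_of_val_ne (by simp; omega)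

lemma X_f0 (n : ℕ) : X (f0 n) = ∅ := by
  rw [Finset.eq_empty_iff_forall_notMem]
  intro pr hm
  rw [mem_X] at hm
  obtain ⟨h1, _, h3, h4, _⟩ := hm
  have hval : ((f0 n pr.1 : Fin (2*n)) : ℕ) = (pr.1 : ℕ) + 1 ∨
      ((f0 n pr.1 : Fin (2*n)) : ℕ) = (pr.1 : ℕ) - 1 := by
    rw [f0_apply]
    unfold pairFn
    split
    · left; rfl
    · right; rfl
  simp only [Fin.lt_def] at h1 h3 h4
  omega

def Pf (n : ℕ) (f : Equiv.Perm (Fin (2*n))) (i : ℕ) : Prop :=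
  ∃ hi : 2*i+1 < 2*n, f ⟨2*i, by omega⟩ ≠ ⟨2*i+1, hi⟩

lemma exists_Pf (n : ℕ) (f : Equiv.Perm (Fin (2*n))) (hinv : Function.Involutive ⇑f)
    (hne : f ≠ f0 n) : ∃ i, Pf n f i := by
  by_contra h
  push_neg at h
  apply hne
  ext x
  have hx := x.isLt
  rcases Nat.even_or_odd (x : ℕ) with he | ho
  · obtain ⟨j, hjx⟩ := he
    have hj : 2*j+1 < 2*n := by omega
    have hxe : x = (⟨2*j, by omega⟩ : Fin (2*n)) := Fin.ext (show (x:ℕ) = 2*j by omega)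
    have hP := h j
    rw [Pf] at hP
    push_neg at hP
    rw [hxe, hP hj, f0_even n j hj]
  · obtain ⟨j, hjx⟩ := ho
    have hj : 2*j+1 < 2*n := by omega
    have hxe : (⟨2*j+1, hj⟩ : Fin (2*n)) = x := Fin.ext (show 2*j+1 = (x:ℕ) by omega)
    have hP := h j
    rw [Pf] at hP
    push_neg at hP
    have e1 : f ⟨2*j+1, hj⟩ = ⟨2*j, by omega⟩ := by
      rw [← hP hj]; exact hinv _
    have e2 : f0 n ⟨2*j+1, hj⟩ = ⟨2*j, by omega⟩ := by
      rw [← f0_even n j hj]; exact pairFn_invol n _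
    rw [hxe] at e1 e2
    rw [e1, e2]

lemma step (n k : ℕ) (f : Equiv.Perm (Fin (2*n))) (hinv : Function.Involutive ⇑f)
    (hfpf : ∀ x, f x ≠ x) (a b : Fin (2*n)) (hav : (a:ℕ) = 2*k) (hbv : (b:ℕ) = 2*k+1)
    (hka : f a ≠ b)
    (hmin : ∀ j (hj : 2*j+1 < 2*n), j < k → f ⟨2*j, by omega⟩ = ⟨2*j+1, hj⟩)
    (g : Equiv.Perm (Fin (2*n)))
    (hg : g = Equiv.swap (f a) (f b) * f * Equiv.swap (f a) (f b)) :
    Function.Involutive ⇑g ∧ (∀ x, g x ≠ x) ∧ g a ≠ b ∧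
    (∀ j (hj : 2*j+1 < 2*n), j < k → g ⟨2*j, by omega⟩ = ⟨2*j+1, hj⟩) ∧
    (Equiv.swap (g a) (g b) * g * Equiv.swap (g a) (g b) = f) ∧ g ≠ f ∧
    ((-1:ℤ)^(X f).card + (-1:ℤ)^(X g).card = 0) := by
  have hinv' : ∀ x, f (f x) = x := hinv
  have hlow : ∀ x : Fin (2*n), (x:ℕ) < (a:ℕ) → ((f x : Fin (2*n)):ℕ) < (a:ℕ) := by
    intro x hx
    rcases Nat.even_or_odd (x:ℕ) with he | ho
    · obtain ⟨j, hjx⟩ := he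
      have hj : 2*j+1 < 2*n := by have := x.isLt; omega
      have hxe : x = (⟨2*j, by omega⟩ : Fin (2*n)) := Fin.ext (show (x:ℕ) = 2*j by omega)
      rw [hxe, hmin j hj (by omega)]
      show 2*j+1 < (a:ℕ)
      omega
    · obtain ⟨j, hjx⟩ := ho
      have hj : 2*j+1 < 2*n := by have := x.isLt; omega
      have hxe : (⟨2*j+1, hj⟩ : Fin (2*n)) = x := Fin.ext (show 2*j+1 = (x:ℕ) by omega)
      have hjk : j < k := by omega
      have e1 : f ⟨2*j+1, hj⟩ = ⟨2*j, by omega⟩ := by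
        rw [← hmin j hj hjk]; exact hinv' _
      rw [hxe] at e1
      rw [e1]
      show 2*j < (a:ℕ)
      omega
  have hfav : (a:ℕ)+1 < ((f a : Fin (2*n)):ℕ) := by
    have h1 : ((f a : Fin (2*n)):ℕ) ≠ (a:ℕ) := fun h => hfpf a (Fin.ext h)
    have h2 : ((f a : Fin (2*n)):ℕ) ≠ (b:ℕ) := fun h => hka (Fin.ext h)
    have h3 : ¬ ((f a : Fin (2*n)):ℕ) < (a:ℕ) := fun h => by
      have := hlow (f a) h
      rw [hinv' a] at this
      omega
    omega
  have hbna : f b ≠ a := fun h => hka ((congrArg f h).symm.trans (hinv' b))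
  have hfbv : (a:ℕ)+1 < ((f b : Fin (2*n)):ℕ) := by
    have h1 : ((f b : Fin (2*n)):ℕ) ≠ (b:ℕ) := fun h => hfpf b (Fin.ext h)
    have h2 : ((f b : Fin (2*n)):ℕ) ≠ (a:ℕ) := fun h => hbna (Fin.ext h)
    have h3 : ¬ ((f b : Fin (2*n)):ℕ) < (a:ℕ) := fun h => by
      have := hlow (f b) h
      rw [hinv' b] at this
      omega
    omega
  have hfab : f a ≠ f b := fun h => absurd (congrArg Fin.val (f.injective h)) (by omega)
  have swa : Equiv.swap (f a) (f b) a = a :=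
    Equiv.swap_apply_of_ne_of_ne (Fin.ne_of_val_ne (by omega)) (Fin.ne_of_val_ne (by omega))
  have swb : Equiv.swap (f a) (f b) b = b :=
    Equiv.swap_apply_of_ne_of_ne (Fin.ne_of_val_ne (by omega)) (Fin.ne_of_val_ne (by omega))
  have hga : g a = f b := by
    rw [hg]; simp only [Equiv.Perm.mul_apply, swa, Equiv.swap_apply_left]
  have hgb : g b = f a := by
    rw [hg]; simp only [Equiv.Perm.mul_apply, swb, Equiv.swap_apply_right]
  have hoff : ∀ x, x ≠ a → x ≠ b → x ≠ f a → x ≠ f b → g x = f x := by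
    intro x h1 h2 h3 h4
    rw [hg]
    simp only [Equiv.Perm.mul_apply]
    rw [Equiv.swap_apply_of_ne_of_ne h3 h4,
      Equiv.swap_apply_of_ne_of_ne (fun hh => h1 (f.injective hh))
        (fun hh => h2 (f.injective hh))]
  have hgfa : g (f a) = b := by
    rw [hg]
    simp only [Equiv.Perm.mul_apply, Equiv.swap_apply_left, hinv' b, swb]
  have hgfb : g (f b) = a := by
    rw [hg]
    simp only [Equiv.Perm.mul_apply, Equiv.swap_apply_right, hinv' a, swa]
  have hginv : Function.Involutive ⇑g := by
    intro x
    rw [hg]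
    simp only [Equiv.Perm.mul_apply, Equiv.swap_apply_self, hinv' _]
  have hgfpf : ∀ x, g x ≠ x := by
    intro x hx
    rw [hg] at hx
    simp only [Equiv.Perm.mul_apply] at hx
    have := congrArg (Equiv.swap (f a) (f b)) hx
    rw [Equiv.swap_apply_self] at this
    exact hfpf _ this
  have hgka : g a ≠ b := by rw [hga]; exact Fin.ne_of_val_ne (by omega)
  have hgmin : ∀ j (hj : 2*j+1 < 2*n), j < k → g ⟨2*j, by omega⟩ = ⟨2*j+1, hj⟩ := by
    intro j hj hjk
    have hx1 : (⟨2*j, by omega⟩ : Fin (2*n)) ≠ a := Fin.ne_of_val_ne (by show 2*j ≠ (a:ℕ); omega)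
    have hx2 : (⟨2*j, by omega⟩ : Fin (2*n)) ≠ b := Fin.ne_of_val_ne (by show 2*j ≠ (b:ℕ); omega)
    have hx3 : (⟨2*j, by omega⟩ : Fin (2*n)) ≠ f a := Fin.ne_of_val_ne (by show 2*j ≠ ((f a : Fin (2*n)):ℕ); omega)
    have hx4 : (⟨2*j, by omega⟩ : Fin (2*n)) ≠ f b := Fin.ne_of_val_ne (by show 2*j ≠ ((f b : Fin (2*n)):ℕ); omega)
    rw [hoff _ hx1 hx2 hx3 hx4]
    exact hmin j hj hjk
  have hdouble : Equiv.swap (g a) (g b) * g * Equiv.swap (g a) (g b) = f := by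
    rw [hga, hgb, Equiv.swap_comm (f b) (f a), hg]
    ext x
    simp only [Equiv.Perm.mul_apply, Equiv.swap_apply_self]
  have hgnef : g ≠ f := fun h => hfab (by rw [← hga, h])
  have hsign := sum_pair f g a b (by omega) hga hgb hoff (hinv' a) (hinv' b) hgfa hgfb
    hfav hfbv hlow hfab
  exact ⟨hginv, hgfpf, hgka, hgmin, hdouble, hgnef, hsign⟩

noncomputable def Phi (n : ℕ) (f : Equiv.Perm (Fin (2*n))) (ex : ∃ i, Pf n f i) :
    Equiv.Perm (Fin (2*n)) :=
  Equiv.swap (f ⟨2*Nat.find ex, by have := (Nat.find_spec ex).choose; omega⟩)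
      (f ⟨2*Nat.find ex+1, (Nat.find_spec ex).choose⟩) * f *
  Equiv.swap (f ⟨2*Nat.find ex, by have := (Nat.find_spec ex).choose; omega⟩)
      (f ⟨2*Nat.find ex+1, (Nat.find_spec ex).choose⟩)

lemma Phi_eq (n : ℕ) (f : Equiv.Perm (Fin (2*n))) (ex : ∃ i, Pf n f i) {k : ℕ}
    (hfind : Nat.find ex = k) (hk : 2*k+1 < 2*n) :
    Phi n f ex = Equiv.swap (f ⟨2*k, by omega⟩) (f ⟨2*k+1, hk⟩) * f *
      Equiv.swap (f ⟨2*k, by omega⟩) (f ⟨2*k+1, hk⟩) := by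
  subst hfind; rfl

lemma master (n : ℕ) (f : Equiv.Perm (Fin (2*n))) (hinv : Function.Involutive ⇑f)
    (hfpf : ∀ x, f x ≠ x) (hne : f ≠ f0 n) (ex : ∃ i, Pf n f i) :
    Function.Involutive ⇑(Phi n f ex) ∧ (∀ x, Phi n f ex x ≠ x) ∧ Phi n f ex ≠ f0 n ∧
    Phi n f ex ≠ f ∧
    ((-1:ℤ)^(X f).card + (-1:ℤ)^(X (Phi n f ex)).card = 0) ∧
    (∀ ex' : ∃ i, Pf n (Phi n f ex) i, Phi n (Phi n f ex) ex' = f) := by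
  have spec : Pf n f (Nat.find ex) := Nat.find_spec ex
  rw [Pf] at spec
  obtain ⟨hklt, hka⟩ := spec
  have hmin : ∀ j (hj : 2*j+1 < 2*n), j < Nat.find ex → f ⟨2*j, by omega⟩ = ⟨2*j+1, hj⟩ := by
    intro j hj hjk
    have hm := Nat.find_min ex hjk
    rw [Pf] at hm
    push_neg at hm
    exact hm hj
  have hPhi : Phi n f ex = Equiv.swap (f ⟨2*Nat.find ex, by omega⟩) (f ⟨2*Nat.find ex+1, hklt⟩)
      * f * Equiv.swap (f ⟨2*Nat.find ex, by omega⟩) (f ⟨2*Nat.find ex+1, hklt⟩) :=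
    Phi_eq n f ex rfl hklt
  obtain ⟨c1, c2, c3, c4, c5, c6, c7⟩ :=
    step n (Nat.find ex) f hinv hfpf ⟨2*Nat.find ex, by omega⟩ ⟨2*Nat.find ex+1, hklt⟩
      rfl rfl hka hmin (Phi n f ex) hPhi
  have hPfg : Pf n (Phi n f ex) (Nat.find ex) := ⟨hklt, c3⟩
  refine ⟨c1, c2, ?_, c6, c7, ?_⟩
  · intro h
    apply c3
    rw [h]
    exact f0_even n (Nat.find ex) hklt
  · intro ex'
    have hfind' : Nat.find ex' = Nat.find ex := by
      rw [Nat.find_eq_iff]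
      refine ⟨hPfg, fun j hjk => ?_⟩
      rw [Pf]
      push_neg
      intro hj
      exact c4 j hj hjk
    rw [Phi_eq n (Phi n f ex) ex' hfind' hklt]
    exact c5

end S0

theorem statement0 (n : ℕ) (hn : 1 ≤ n) :
    ∑ f ∈ Finset.univ.filter
        (fun f : Equiv.Perm (Fin (2 * n)) => Function.Involutive f ∧ ∀ x, f x ≠ x),
      (-1 : ℤ) ^ ((Finset.univ.filter
        (fun pr : Fin (2 * n) × Fin (2 * n) =>
          pr.1 < f pr.1 ∧ pr.2 < f pr.2 ∧ pr.1 < pr.2 ∧ pr.2 < f pr.1 ∧ f pr.1 < f pr.2)).card)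
    = 1 := by
  classical
  show ∑ f ∈ Finset.univ.filter
        (fun f : Equiv.Perm (Fin (2 * n)) => Function.Involutive f ∧ ∀ x, f x ≠ x),
      (-1 : ℤ) ^ (S0.X f).card = 1
  set M := Finset.univ.filter
      (fun f : Equiv.Perm (Fin (2 * n)) => Function.Involutive f ∧ ∀ x, f x ≠ x) with hM
  have hf0M : S0.f0 n ∈ M := by
    rw [hM, Finset.mem_filter]
    exact ⟨Finset.mem_univ _, S0.pairFn_invol n, S0.f0_fpf n⟩
  have memF : ∀ f, f ∈ M.erase (S0.f0 n) →
      (Function.Involutive ⇑f ∧ ∀ x, f x ≠ x) ∧ f ≠ S0.f0 n := by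
    intro f hf
    have h2 := Finset.mem_of_mem_erase hf
    rw [hM, Finset.mem_filter] at h2
    exact ⟨h2.2, Finset.ne_of_mem_erase hf⟩
  have h1 : (-1:ℤ) ^ (S0.X (S0.f0 n)).card = 1 := by rw [S0.X_f0]; simp
  have h0 : ∑ f ∈ M.erase (S0.f0 n), (-1:ℤ) ^ (S0.X f).card = 0 := by
    refine Finset.sum_involution
      (fun f hf => S0.Phi n f (S0.exists_Pf n f (memF f hf).1.1 (memF f hf).2)) ?_ ?_ ?_ ?_
    · intro f hf
      exact (S0.master n f (memF f hf).1.1 (memF f hf).1.2 (memF f hf).2 _).2.2.2.2.1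
    · intro f hf _
      exact (S0.master n f (memF f hf).1.1 (memF f hf).1.2 (memF f hf).2 _).2.2.2.1
    · intro f hf
      have hm := S0.master n f (memF f hf).1.1 (memF f hf).1.2 (memF f hf).2
        (S0.exists_Pf n f (memF f hf).1.1 (memF f hf).2)
      exact Finset.mem_erase.mpr ⟨hm.2.2.1,
        Finset.mem_filter.mpr ⟨Finset.mem_univ _, hm.1, hm.2.1⟩⟩
    · intro f hf
      exact (S0.master n f (memF f hf).1.1 (memF f hf).1.2 (memF f hf).2 _).2.2.2.2.2 _
  rw [← Finset.sum_erase_add M _ hf0M, h1, h0]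
  norm_num
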